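/- arXiv:2509.06302 — 5 statements merged into one kernel-verified Lean document; each statement's English description precedes it below -/
import Mathlib

section
/- Let E₁ ⊆ E₂ ⊆ ⋯ be a chain of finite sets with union E, and let (E,h) be a polymatroid of finite type. Then h is almost entropic if and only if the restriction of h to P(Eₙ) is almost entropic for every n. -/
open scoped Classical

def IsPolymatroid {E : Type*} (f : Set E → ℝ) : Prop :=
  f ∅ = 0 ∧ (∀ A B : Set E, A ⊆ B → f A ≤ f B) ∧
    ∀ A B : Set E, f (A ∪ B) + f (A ∩ B) ≤ f A + f B

def FiniteType {E : Type*} (f : Set E → ℝ) : Prop :=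
  ∀ S : Set E, f S = sSup (f '' {F | F ⊆ S ∧ F.Finite})

/-- Joint entropy of the family `(X_i)_{i ∈ S}` on a finite probability space. -/
noncomputable def jointEntropy {α Ω : Type} [Fintype Ω] (p : Ω → ℝ)
    {V : α → Type} (X : ∀ i, Ω → V i) (S : Set α) : ℝ :=
  ∑ ω : Ω, p ω * Real.logb 2
    (1 / ∑ ω' : Ω, if (∀ i ∈ S, X i ω' = X i ω) then p ω' else 0)

/-- An entropic polymatroid: the joint entropy function of a family of random
variables on a finite probability space. -/
def IsEntropic {α : Type} (h : Set α → ℝ) : Prop :=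
  ∃ (Ω : Type) (_ : Fintype Ω) (p : Ω → ℝ) (V : α → Type) (X : ∀ i, Ω → V i),
    (∀ ω, 0 ≤ p ω) ∧ (∑ ω, p ω) = 1 ∧ ∀ S : Set α, h S = jointEntropy p X S

/-- Almost entropic: a pointwise limit of entropic polymatroids. -/
def IsAlmostEntropic {α : Type} (h : Set α → ℝ) : Prop :=
  ∃ g : ℕ → Set α → ℝ, (∀ n, IsEntropic (g n)) ∧
    ∀ S : Set α, Filter.Tendsto (fun n => g n S) Filter.atTop (nhds (h S))

lemma jointEntropy_congr {α β Ω : Type} [Fintype Ω] (p : Ω → ℝ) {V : α → Type} {W : β → Type}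
    (X : ∀ i, Ω → V i) (Y : ∀ j, Ω → W j) (S : Set α) (T : Set β)
    (hc : ∀ ω ω' : Ω, (∀ i ∈ S, X i ω' = X i ω) ↔ (∀ j ∈ T, Y j ω' = Y j ω)) :
    jointEntropy p X S = jointEntropy p Y T := by
  unfold jointEntropy
  refine Finset.sum_congr rfl fun ω _ => ?_
  have : (∑ ω' : Ω, if (∀ i ∈ S, X i ω' = X i ω) then p ω' else 0)
      = ∑ ω' : Ω, if (∀ j ∈ T, Y j ω' = Y j ω) then p ω' else 0 := by
    refine Finset.sum_congr rfl fun ω' _ => ?_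
    exact if_congr (hc ω ω') rfl rfl
  rw [this]

lemma IsEntropic.restrict {α : Type} (P : Set α) {e : Set α → ℝ} (he : IsEntropic e) :
    IsEntropic (fun S : Set P => e (Subtype.val '' S)) := by
  obtain ⟨Ω, inst, p, V, X, hp, hsum, hE⟩ := he
  refine ⟨Ω, inst, p, fun j : P => V j.1, fun j => X j.1, hp, hsum, fun S => ?_⟩
  show e _ = _
  rw [hE]
  refine jointEntropy_congr p X _ _ S fun ω ω' => ?_
  constructor
  · intro H j hj
    exact H j.1 ⟨j, hj, rfl⟩
  · rintro H i ⟨j, hj, rfl⟩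
    exact H j hj

lemma IsEntropic.extend {α : Type} (P : Set α) {e : Set P → ℝ} (he : IsEntropic e) :
    IsEntropic (fun S : Set α => e (Subtype.val ⁻¹' S)) := by
  obtain ⟨Ω, inst, p, V, X, hp, hsum, hE⟩ := he
  refine ⟨Ω, inst, p, fun i : α => ∀ h : i ∈ P, V ⟨i, h⟩,
    fun i ω => fun h => X ⟨i, h⟩ ω, hp, hsum, fun S => ?_⟩
  show e _ = _
  rw [hE]
  refine (jointEntropy_congr p _ X _ (Subtype.val ⁻¹' S) fun ω ω' => ?_).symm
  constructor
  · intro H j hj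
    exact congrFun (H j.1 hj) j.2
  · intro H i hi
    funext hm
    exact H ⟨i, hm⟩ hi

theorem almostEntropic_iff_restrictions {α : Type} (C : ℕ → Set α)
    (hmono : Monotone C) (hfin : ∀ n, (C n).Finite) (hunion : ⋃ n, C n = Set.univ)
    (h : Set α → ℝ) (hpoly : IsPolymatroid h) (hft : FiniteType h) :
    IsAlmostEntropic h ↔
      ∀ n, IsAlmostEntropic (fun S : Set (C n) => h (Subtype.val '' S)) := by
  obtain ⟨-, hmonoh, -⟩ := hpoly
  constructor
  · rintro ⟨g, hent, hconv⟩ n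
    exact ⟨fun k S => g k (Subtype.val '' S), fun k => (hent k).restrict (C n),
      fun S => hconv _⟩
  · intro hres
    -- h (S ∩ C n) tends to h S
    have key : ∀ S : Set α, Filter.Tendsto (fun n => h (S ∩ C n)) Filter.atTop (nhds (h S)) := by
      intro S
      rw [Metric.tendsto_atTop]
      intro ε hε
      have hlt : h S - ε < sSup (h '' {F | F ⊆ S ∧ F.Finite}) := by
        rw [← hft S]; linarith
      have hne : (h '' {F | F ⊆ S ∧ F.Finite}).Nonempty :=
        ⟨h ∅, ∅, ⟨Set.empty_subset _, Set.finite_empty⟩, rfl⟩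
      obtain ⟨b, ⟨F, ⟨hFS, hFfin⟩, rfl⟩, hb⟩ := exists_lt_of_lt_csSup hne hlt
      -- find N with F ⊆ C N
      have hmem : ∀ x : α, ∃ n, x ∈ C n := by
        intro x
        have : x ∈ ⋃ n, C n := hunion ▸ Set.mem_univ x
        exact Set.mem_iUnion.1 this
      choose φ hφ using hmem
      obtain ⟨N, hN⟩ : ∃ N, F ⊆ C N := by
        refine ⟨hFfin.toFinset.sup φ, fun x hx => ?_⟩
        exact hmono (Finset.le_sup (hFfin.mem_toFinset.2 hx)) (hφ x)
      refine ⟨N, fun n hn => ?_⟩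
      have h1 : h F ≤ h (S ∩ C n) :=
        hmonoh _ _ (Set.subset_inter hFS ((hN.trans (hmono hn))))
      have h2 : h (S ∩ C n) ≤ h S := hmonoh _ _ Set.inter_subset_left
      rw [Real.dist_eq, abs_sub_comm, abs_of_nonneg (by linarith)]
      linarith
    -- choose good approximants
    have pick : ∀ n : ℕ, ∃ e : Set (C n) → ℝ, IsEntropic e ∧
        ∀ S : Set (C n), |e S - h (Subtype.val '' S)| < 1 / (n + 1) := by
      intro n
      obtain ⟨g, hent, hconv⟩ := hres n
      haveI : Finite (C n) := (hfin n).to_subtype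
      have hev : ∀ᶠ k in Filter.atTop, ∀ S : Set (C n),
          |g k S - h (Subtype.val '' S)| < 1 / (n + 1) := by
        rw [Filter.eventually_all]
        intro S
        have hpos : (0 : ℝ) < 1 / (n + 1) := by positivity
        have := (hconv S).eventually (Metric.ball_mem_nhds _ hpos)
        filter_upwards [this] with k hk
        simpa [Real.dist_eq] using hk
      obtain ⟨k, hk⟩ := hev.exists
      exact ⟨g k, hent k, hk⟩
    choose e hee heh using pick
    refine ⟨fun n S => e n (Subtype.val ⁻¹' S), fun n => (hee n).extend (C n), fun S => ?_⟩
    have himg : ∀ n, (Subtype.val '' (Subtype.val ⁻¹' S : Set (C n))) = S ∩ C n := by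
      intro n
      rw [Subtype.image_preimage_coe, Set.inter_comm]
    have hd : Filter.Tendsto (fun n => e n (Subtype.val ⁻¹' S) - h (S ∩ C n))
        Filter.atTop (nhds 0) := by
      have hb : ∀ n : ℕ, |e n (Subtype.val ⁻¹' S) - h (S ∩ C n)| ≤ 1 / (n + 1) := by
        intro n
        have := heh n (Subtype.val ⁻¹' S)
        rw [himg n] at this
        exact this.le
      exact squeeze_zero_norm hb tendsto_one_div_add_atTop_nhds_zero_nat
    have := hd.add (key S)
    simpa using this
end

section
/- Let (E,f,S) be a (possibly incoherent) PDG of rank r. Let s⁽¹⁾,…,s⁽ⁿ⁾ ∈ S and for each t let {i_t,j_t} be distinct index pairs in {1,…,r} with {i_t,j_t} ≠ {i_u,j_u} for t ≠ u, such that each s⁽ᵗ⁾_{i_t,j_t} ∈ E. If the graph on vertex set ∪_t {i_t,j_t} with edges {i_t,j_t} contains no cycle, then the set A = {s⁽ᵗ⁾_{i_t,j_t} : 1 ≤ t ≤ n} satisfies f(A) = n. -/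
structure IncoherentPDG (E S : Type*) (r : ℕ) where
  f : Set E → ℝ
  f_empty : f ∅ = 0
  f_mono : ∀ A B : Set E, A ⊆ B → f A ≤ f B
  f_submod : ∀ A B : Set E, f (A ∪ B) + f (A ∩ B) ≤ f A + f B
  inv : S → S
  e : S
  inv_invol : ∀ s, inv (inv s) = s
  inv_e : inv e = e
  b : Fin r → E
  rank_basis : ∀ A : Finset (Fin r), f (b '' (A : Set (Fin r))) = A.card
  present : S → Fin r → Fin r → Prop
  elt : S → Fin r → Fin r → E
  present_symm : ∀ s i j, present s i j ↔ present (inv s) j i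
  elt_symm : ∀ s i j, elt s i j = elt (inv s) j i
  frame : ∀ s i j, i ≠ j → present s i j → f {b i, b j, elt s i j} = 2
  rank_elt : ∀ s i j, i ≠ j → present s i j → f {elt s i j} = 1
  rank_b_elt : ∀ s i j, i ≠ j → present s i j → f {b i, elt s i j} = 2


lemma acyclicIndepAux_acyclic_anti {V : Type*} {G H : SimpleGraph V} (h : G ≤ H)
    (hH : H.IsAcyclic) : G.IsAcyclic :=
  fun _ c hc => hH (c.mapLe h) (hc.mapLe h)

lemma acyclicIndepAux_exists_leaf {r n : ℕ} (I J : Fin (n + 1) → Fin r)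
    (hne : ∀ t, I t ≠ J t)
    (hpairs : ∀ t u : Fin (n + 1), t ≠ u → Sym2.mk (I t) (J t) ≠ Sym2.mk (I u) (J u))
    (hacyc : (SimpleGraph.fromEdgeSet
        {x : Sym2 (Fin r) | ∃ t, x = Sym2.mk (I t) (J t)}).IsAcyclic) :
    ∃ t₀ v, (v = I t₀ ∨ v = J t₀) ∧ ∀ t, t ≠ t₀ → I t ≠ v ∧ J t ≠ v := by
  set G := SimpleGraph.fromEdgeSet {x : Sym2 (Fin r) | ∃ t, x = Sym2.mk (I t) (J t)} with hG
  have hadj : ∀ t, G.Adj (I t) (J t) := fun t =>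
    (SimpleGraph.fromEdgeSet_adj _).2 ⟨⟨t, rfl⟩, hne t⟩
  set Q : Set ℕ := {l : ℕ | ∃ (u w : Fin r) (p : G.Walk u w), p.IsPath ∧ p.length = l} with hQ
  have h1 : 1 ∈ Q := by
    refine ⟨I 0, J 0, SimpleGraph.Walk.cons (hadj 0) SimpleGraph.Walk.nil, ?_, rfl⟩
    refine SimpleGraph.Walk.IsPath.cons (SimpleGraph.Walk.IsPath.nil) ?_
    simp [hne 0]
  have hbdd : BddAbove Q := by
    refine ⟨r, ?_⟩
    rintro l ⟨u, w, p, hp, rfl⟩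
    have := hp.length_lt
    simp only [Fintype.card_fin] at this
    omega
  obtain ⟨u, w, p, hp, hlen⟩ := Nat.sSup_mem ⟨1, h1⟩ hbdd
  have hL1 : 1 ≤ p.length := by
    rw [hlen]; exact le_csSup hbdd h1
  cases p with
  | nil => simp at hL1
  | @cons _ x _ h q =>
    rw [SimpleGraph.Walk.cons_isPath_iff] at hp
    obtain ⟨hq, hu⟩ := hp
    have hp' : (SimpleGraph.Walk.cons h q).IsPath := SimpleGraph.Walk.IsPath.cons hq hu
    -- key claim: every neighbor of u is x
    have key : ∀ y, G.Adj u y → y = x := by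
      intro y hy
      by_cases hmem : y ∈ (SimpleGraph.Walk.cons h q).support
      · have hpq : ((SimpleGraph.Walk.cons h q).takeUntil y hmem).IsPath := hp'.takeUntil hmem
        by_cases he : s(y, u) ∈ ((SimpleGraph.Walk.cons h q).takeUntil y hmem).edges
        · have he' : s(y, u) ∈ (SimpleGraph.Walk.cons h q).edges :=
            SimpleGraph.Walk.edges_takeUntil_subset _ hmem he
          rw [SimpleGraph.Walk.edges_cons] at he'
          rcases List.mem_cons.mp he' with h1 | h2
          · rcases Sym2.eq_iff.mp h1 with ⟨rfl, rfl⟩ | ⟨rfl, -⟩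
            · exact absurd rfl hy.ne
            · rfl
          · exact absurd (SimpleGraph.Walk.snd_mem_support_of_mem_edges q h2) hu
        · exact absurd (SimpleGraph.Path.cons_isCycle ⟨_, hpq⟩ hy.symm he) (hacyc _)
      · exfalso
        have hnp : (SimpleGraph.Walk.cons hy.symm (SimpleGraph.Walk.cons h q)).IsPath := hp'.cons hmem
        have hmemQ : (SimpleGraph.Walk.cons hy.symm (SimpleGraph.Walk.cons h q)).length ∈ Q :=
          ⟨y, w, _, hnp, rfl⟩
        have hle := le_csSup hbdd hmemQ
        rw [SimpleGraph.Walk.length_cons, hlen] at hle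
        omega
    obtain ⟨⟨t₀, ht₀⟩, -⟩ := (SimpleGraph.fromEdgeSet_adj _).1 h
    refine ⟨t₀, u, ?_, ?_⟩
    · rcases Sym2.eq_iff.mp ht₀ with ⟨h1, -⟩ | ⟨h1, -⟩
      · exact Or.inl h1
      · exact Or.inr h1
    · intro t ht
      constructor
      · intro hIt
        have : J t = x := key (J t) (hIt ▸ hadj t)
        refine hpairs t t₀ ht ?_
        rw [← ht₀, hIt, this]
      · intro hJt
        have : I t = x := key (I t) (hJt ▸ (hadj t).symm)
        refine hpairs t t₀ ht ?_
        rw [← ht₀, hJt, this, Sym2.eq_swap]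

namespace acyclicIndep

variable {E S : Type*} {r : ℕ} (P : IncoherentPDG E S r)

lemma f_nonneg (A : Set E) : 0 ≤ P.f A := by
  have h := P.f_mono ∅ A (Set.empty_subset A)
  rwa [P.f_empty] at h

lemma insert_span {X Y : Set E} {x : E} (hYX : Y ⊆ X)
    (h : P.f (insert x Y) = P.f Y) : P.f (insert x X) = P.f X := by
  have h1 := P.f_submod (insert x Y) X
  have hu : insert x Y ∪ X = insert x X := by
    rw [Set.insert_union, Set.union_eq_self_of_subset_left hYX]
  have h2 := P.f_mono Y (insert x Y ∩ X) (Set.subset_inter (Set.subset_insert _ _) hYX)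
  have h3 := P.f_mono X (insert x X) (Set.subset_insert _ _)
  rw [hu, h] at h1
  linarith

lemma pair_rank {i j : Fin r} (hij : i ≠ j) : P.f {P.b i, P.b j} = 2 := by
  have h := P.rank_basis {i, j}
  rw [Finset.card_pair hij] at h
  rw [Finset.coe_insert, Finset.coe_singleton, Set.image_insert_eq, Set.image_singleton] at h
  exact_mod_cast h

lemma elt_span {X : Set E} {s : S} {i j : Fin r} (hij : i ≠ j) (hp : P.present s i j)
    (hi : P.b i ∈ X) (hj : P.b j ∈ X) : P.f (insert (P.elt s i j) X) = P.f X := by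
  have hsub : ({P.b i, P.b j} : Set E) ⊆ X := by
    rw [Set.insert_subset_iff, Set.singleton_subset_iff]; exact ⟨hi, hj⟩
  have hkey : P.f (insert (P.elt s i j) {P.b i, P.b j}) = P.f {P.b i, P.b j} := by
    have hf := P.frame s i j hij hp
    have hset : insert (P.elt s i j) ({P.b i, P.b j} : Set E)
        = {P.b i, P.b j, P.elt s i j} := by
      ext y
      simp only [Set.mem_insert_iff, Set.mem_singleton_iff]
      tauto
    rw [hset, hf, pair_rank P hij]
  exact insert_span P hsub hkey

lemma union_image_span {n : ℕ} (ss : Fin n → S) (ii jj : Fin n → Fin r)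
    (hne : ∀ t, ii t ≠ jj t) (hp : ∀ t, P.present (ss t) (ii t) (jj t))
    (X : Set E) (hX : ∀ t, P.b (ii t) ∈ X ∧ P.b (jj t) ∈ X) (T : Finset (Fin n)) :
    P.f (X ∪ (fun t => P.elt (ss t) (ii t) (jj t)) '' T) = P.f X := by
  classical
  induction T using Finset.induction with
  | empty => simp
  | insert t T hT ih =>
    rw [Finset.coe_insert, Set.image_insert_eq, Set.union_insert]
    rw [elt_span P (hne t) (hp t)
      (Set.mem_union_left _ (hX t).1) (Set.mem_union_left _ (hX t).2)]
    exact ih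

lemma main_induction : ∀ (n : ℕ) (s : Fin n → S) (I J : Fin n → Fin r),
    (∀ t, I t ≠ J t) → (∀ t, P.present (s t) (I t) (J t)) →
    (∀ t u : Fin n, t ≠ u → Sym2.mk (I t) (J t) ≠ Sym2.mk (I u) (J u)) →
    (SimpleGraph.fromEdgeSet
        {x : Sym2 (Fin r) | ∃ t, x = Sym2.mk (I t) (J t)}).IsAcyclic →
    P.f (Set.range fun t => P.elt (s t) (I t) (J t)) = n := by
  intro n
  induction n with
  | zero =>
    intro s I J _ _ _ _
    rw [Set.range_eq_empty, P.f_empty]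
    simp
  | succ n ih =>
    intro s I J hne hpres hpairs hacyc
    obtain ⟨t₀, v, hv, hleaf⟩ := acyclicIndepAux_exists_leaf I J hne hpairs hacyc
    set g : Fin (n + 1) → E := fun t => P.elt (s t) (I t) (J t) with hgdef
    -- local data at the leaf edge
    obtain ⟨i₀, hi₀, hbg2, hbbg2⟩ :
        ∃ i₀, i₀ ≠ v ∧ P.f {P.b i₀, g t₀} = 2 ∧ P.f {P.b i₀, P.b v, g t₀} = 2 := by
      rcases hv with hv | hv
      · -- v = I t₀, use the inverse element
        have hp' := (P.present_symm (s t₀) (I t₀) (J t₀)).1 (hpres t₀)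
        have he' : P.elt (P.inv (s t₀)) (J t₀) (I t₀) = g t₀ :=
          (P.elt_symm (s t₀) (I t₀) (J t₀)).symm
        refine ⟨J t₀, by rw [hv]; exact (hne t₀).symm, ?_, ?_⟩
        · have h2 := P.rank_b_elt _ _ _ (hne t₀).symm hp'
          rwa [he'] at h2
        · have h2 := P.frame _ _ _ (hne t₀).symm hp'
          rw [he'] at h2
          rw [hv]
          exact h2
      · refine ⟨I t₀, by rw [hv]; exact hne t₀, ?_, ?_⟩
        · exact P.rank_b_elt _ _ _ (hne t₀) (hpres t₀)
        · rw [hv]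
          exact P.frame _ _ _ (hne t₀) (hpres t₀)
    have hgt1 : P.f {g t₀} = 1 := P.rank_elt _ _ _ (hne t₀) (hpres t₀)
    -- reindexing away from t₀
    set emb : Fin n → Fin (n + 1) := t₀.succAbove with hembdef
    have hembinj : Function.Injective emb := Fin.succAbove_right_injective
    have hembne : ∀ t, emb t ≠ t₀ := fun t => Fin.succAbove_ne t₀ t
    have ihapp : P.f (Set.range (g ∘ emb)) = n := by
      refine ih (s ∘ emb) (I ∘ emb) (J ∘ emb) (fun t => hne _) (fun t => hpres _)
        (fun t u htu => hpairs _ _ (fun hh => htu (hembinj hh))) ?_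
      refine acyclicIndepAux_acyclic_anti (SimpleGraph.fromEdgeSet_mono ?_) hacyc
      rintro x ⟨t, rfl⟩
      exact ⟨emb t, rfl⟩
    have hrange : Set.range g = insert (g t₀) (Set.range (g ∘ emb)) := by
      ext y
      simp only [Set.mem_range, Set.mem_insert_iff, Function.comp_apply]
      constructor
      · rintro ⟨t, rfl⟩
        by_cases ht : t = t₀
        · exact Or.inl (by rw [ht])
        · obtain ⟨t', ht'⟩ := Fin.exists_succAbove_eq ht
          exact Or.inr ⟨t', by rw [hembdef, ht']⟩
      · rintro (rfl | ⟨t, rfl⟩) <;> exact ⟨_, rfl⟩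
    have hsub1 : Set.range (g ∘ emb) ⊆ Set.range g := Set.range_comp_subset_range _ _
    -- the basis minus v
    set X₁ : Set E := P.b '' ((Finset.univ.erase v : Finset (Fin r)) : Set (Fin r)) with hX₁def
    have hrpos : 1 ≤ r := v.pos
    have hX₁rank : P.f X₁ = (r : ℝ) - 1 := by
      have h := P.rank_basis (Finset.univ.erase v)
      rw [Finset.card_erase_of_mem (Finset.mem_univ v), Finset.card_univ,
        Fintype.card_fin] at h
      rw [hX₁def, h, Nat.cast_sub hrpos, Nat.cast_one]
    have hbmem : ∀ i, i ≠ v → P.b i ∈ X₁ :=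
      fun i hi => ⟨i, by simp [hi], rfl⟩
    have hbrank : P.f (Set.range P.b) = (r : ℝ) := by
      have h := P.rank_basis Finset.univ
      rw [Finset.coe_univ, Set.image_univ, Finset.card_univ, Fintype.card_fin] at h
      exact h
    -- (a) rank of basis together with all elements is r
    have hA : P.f (Set.range P.b ∪ Set.range g) = (r : ℝ) := by
      have h := union_image_span P s I J hne hpres (Set.range P.b)
        (fun t => ⟨⟨_, rfl⟩, ⟨_, rfl⟩⟩) Finset.univ
      rw [Finset.coe_univ, Set.image_univ] at h
      rw [← hgdef] at h
      rw [h, hbrank]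
    -- (b) rank of X₁ with the other elements is r - 1
    have hB : P.f (X₁ ∪ Set.range (g ∘ emb)) = (r : ℝ) - 1 := by
      have h := union_image_span P (s ∘ emb) (I ∘ emb) (J ∘ emb)
        (fun t => hne _) (fun t => hpres _) X₁
        (fun t => ⟨hbmem _ (hleaf _ (hembne t)).1, hbmem _ (hleaf _ (hembne t)).2⟩)
        Finset.univ
      rw [Finset.coe_univ, Set.image_univ] at h
      have hfun : (fun t => P.elt ((s ∘ emb) t) ((I ∘ emb) t) ((J ∘ emb) t)) = g ∘ emb := rfl
      rw [hfun] at h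
      rw [h, hX₁rank]
    -- (c) rank of X₁ with all the elements is r
    have hC : P.f (X₁ ∪ Set.range g) = (r : ℝ) := by
      have hle : P.f (X₁ ∪ Set.range g) ≤ (r : ℝ) := by
        rw [← hA]
        refine P.f_mono _ _ (Set.union_subset_union_left _ ?_)
        rintro y ⟨i, -, rfl⟩
        exact ⟨i, rfl⟩
      have hins : P.f (insert (P.b v) (X₁ ∪ Set.range g)) = P.f (X₁ ∪ Set.range g) := by
        have hsub : ({P.b i₀, g t₀} : Set E) ⊆ X₁ ∪ Set.range g := by
          rw [Set.insert_subset_iff, Set.singleton_subset_iff]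
          exact ⟨Set.mem_union_left _ (hbmem _ hi₀), Set.mem_union_right _ ⟨t₀, rfl⟩⟩
        have hkey : P.f (insert (P.b v) {P.b i₀, g t₀}) = P.f {P.b i₀, g t₀} := by
          have hset : insert (P.b v) ({P.b i₀, g t₀} : Set E)
              = {P.b i₀, P.b v, g t₀} := by
            ext y
            simp only [Set.mem_insert_iff, Set.mem_singleton_iff]
            tauto
          rw [hset, hbbg2, hbg2]
        exact insert_span P hsub hkey
      have hge : (r : ℝ) ≤ P.f (insert (P.b v) (X₁ ∪ Set.range g)) := by
        rw [← hbrank]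
        refine P.f_mono _ _ ?_
        rintro y ⟨i, rfl⟩
        by_cases hiv : i = v
        · rw [hiv]; exact Set.mem_insert _ _
        · exact Set.mem_insert_of_mem _ (Set.mem_union_left _ (hbmem _ hiv))
      rw [hins] at hge
      linarith
    -- lower bound
    have hlow : (n : ℝ) + 1 ≤ P.f (Set.range g) := by
      have hsm := P.f_submod (Set.range g) (X₁ ∪ Set.range (g ∘ emb))
      have huni : Set.range g ∪ (X₁ ∪ Set.range (g ∘ emb)) = X₁ ∪ Set.range g := by
        rw [Set.union_comm, Set.union_assoc, Set.union_eq_self_of_subset_left hsub1]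
      have hint : P.f (Set.range (g ∘ emb))
          ≤ P.f (Set.range g ∩ (X₁ ∪ Set.range (g ∘ emb))) := by
        refine P.f_mono _ _ (Set.subset_inter hsub1 (Set.subset_union_right))
      rw [huni, hC, hB] at hsm
      rw [ihapp] at hint
      linarith
    -- upper bound
    have hupp : P.f (Set.range g) ≤ (n : ℝ) + 1 := by
      have hsm := P.f_submod (Set.range (g ∘ emb)) {g t₀}
      have huni : Set.range (g ∘ emb) ∪ {g t₀} = Set.range g := by
        rw [Set.union_singleton, ← hrange]
      have hnn := f_nonneg P (Set.range (g ∘ emb) ∩ {g t₀})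
      rw [huni, ihapp, hgt1] at hsm
      linarith
    have : P.f (Set.range g) = (n : ℝ) + 1 := le_antisymm hupp hlow
    rw [this]
    push_cast
    ring

end acyclicIndep

/-- Acyclic independence in a (possibly incoherent) PDG. -/
theorem acyclic_independence {E S : Type*} {r n : ℕ} (P : IncoherentPDG E S r)
    (s : Fin n → S) (I J : Fin n → Fin r)
    (hne : ∀ t, I t ≠ J t)
    (hpres : ∀ t, P.present (s t) (I t) (J t))
    (hpairs : ∀ t u : Fin n, t ≠ u → Sym2.mk (I t) (J t) ≠ Sym2.mk (I u) (J u))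
    (hacyc : (SimpleGraph.fromEdgeSet
        {x : Sym2 (Fin r) | ∃ t, x = Sym2.mk (I t) (J t)}).IsAcyclic) :
    P.f (Set.range fun t => P.elt (s t) (I t) (J t)) = n :=
  acyclicIndep.main_induction P n s I J hne hpres hpairs hacyc
end

section
/- Let (E,f,S) be a (possibly incoherent) PDG. Any pair {x,y} of distinct elements of E satisfies f(x,y)=2, unless x = s_{i,j} and y = s'_{i,j} for some s,s' ∈ S and the same index pair {i,j}. -/
namespace IncoherentPDG
variable {E S : Type*} {r : ℕ} (P : IncoherentPDG E S r)

lemma f_nonneg (A : Set E) : 0 ≤ P.f A := by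
  have h := P.f_mono ∅ A (Set.empty_subset A)
  rw [P.f_empty] at h; exact h

lemma card_le (A : Finset (Fin r)) (T : Set E) (h : ∀ i ∈ A, P.b i ∈ T) :
    (A.card : ℝ) ≤ P.f T := by
  rw [← P.rank_basis A]
  apply P.f_mono
  rintro _ ⟨i, hi, rfl⟩
  exact h i (Finset.mem_coe.mp hi)

lemma f_single_b (i : Fin r) : P.f {P.b i} = 1 := by
  have h := P.rank_basis {i}
  simpa using h

lemma pair_le_two (x y : E) (hx : P.f {x} ≤ 1) (hy : P.f {y} ≤ 1) :
    P.f {x, y} ≤ 2 := by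
  have hsub := P.f_submod {x} {y}
  have h0 := P.f_nonneg ({x} ∩ {y} : Set E)
  rw [Set.singleton_union] at hsub
  linarith

lemma pair_ge_two (x y : E) (k l : Fin r)
    (h3 : (3:ℝ) ≤ P.f {x, P.b k, P.b l})
    (hB : P.f {P.b k, P.b l, y} ≤ 2)
    (hy1 : (1:ℝ) ≤ P.f {y}) : (2:ℝ) ≤ P.f {x, y} := by
  have hsub := P.f_submod {x, y} {P.b k, P.b l, y}
  have hU : ({x, P.b k, P.b l} : Set E) ⊆ {x, y} ∪ {P.b k, P.b l, y} := by
    intro z hz; simp at hz ⊢; tauto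
  have hU' := P.f_mono _ _ hU
  have hI : ({y} : Set E) ⊆ ({x, y} : Set E) ∩ {P.b k, P.b l, y} := by
    intro z hz; simp at hz ⊢; tauto
  have hI' := P.f_mono _ _ hI
  linarith

lemma rank3_shared (s : S) (i j l : Fin r) (hij : i ≠ j) (hp : P.present s i j)
    (hli : l ≠ i) (hlj : l ≠ j) :
    (3:ℝ) ≤ P.f {P.elt s i j, P.b j, P.b l} := by
  set x := P.elt s i j with hx
  have hsub := P.f_submod {x, P.b j, P.b l} {x, P.b i, P.b j}
  have hcard : ({i, j, l} : Finset (Fin r)).card = 3 := by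
    rw [Finset.card_insert_of_notMem (by simp [hij, Ne.symm hli]),
      Finset.card_insert_of_notMem (by simp [Ne.symm hlj]), Finset.card_singleton]
  have hU : (3:ℝ) ≤ P.f ({x, P.b j, P.b l} ∪ {x, P.b i, P.b j}) := by
    have h := P.card_le {i, j, l} ({x, P.b j, P.b l} ∪ {x, P.b i, P.b j}) ?_
    · rw [hcard] at h; exact_mod_cast h
    · intro m hm
      simp at hm ⊢
      rcases hm with rfl | rfl | rfl <;> tauto
  have h2 : P.f {P.b j, x} = 2 := by
    rw [hx, P.elt_symm s i j]
    exact P.rank_b_elt (P.inv s) j i (Ne.symm hij) ((P.present_symm s i j).mp hp)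
  have hI : ({P.b j, x} : Set E) ⊆ ({x, P.b j, P.b l} : Set E) ∩ {x, P.b i, P.b j} := by
    intro z hz; simp at hz ⊢; tauto
  have hI' := P.f_mono _ _ hI
  have hBeq : ({x, P.b i, P.b j} : Set E) = {P.b i, P.b j, x} := by
    ext z; simp; tauto
  have hB : P.f {x, P.b i, P.b j} = 2 := by rw [hBeq, hx]; exact P.frame s i j hij hp
  linarith

lemma rank3_disj (s : S) (i j k l : Fin r) (hij : i ≠ j) (hp : P.present s i j)
    (hkl : k ≠ l) (hki : k ≠ i) (hkj : k ≠ j) (hli : l ≠ i) (hlj : l ≠ j) :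
    (3:ℝ) ≤ P.f {P.elt s i j, P.b k, P.b l} := by
  set x := P.elt s i j with hx
  have hsub := P.f_submod {x, P.b k, P.b l} {x, P.b i, P.b j}
  have hcard : ({i, j, k, l} : Finset (Fin r)).card = 4 := by
    rw [Finset.card_insert_of_notMem (by simp [hij, Ne.symm hki, Ne.symm hli]),
      Finset.card_insert_of_notMem (by simp [Ne.symm hkj, Ne.symm hlj]),
      Finset.card_insert_of_notMem (by simp [hkl]), Finset.card_singleton]
  have hU : (4:ℝ) ≤ P.f ({x, P.b k, P.b l} ∪ {x, P.b i, P.b j}) := by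
    have h := P.card_le {i, j, k, l} ({x, P.b k, P.b l} ∪ {x, P.b i, P.b j}) ?_
    · rw [hcard] at h; exact_mod_cast h
    · intro m hm
      simp at hm ⊢
      rcases hm with rfl | rfl | rfl | rfl <;> tauto
  have hI : ({x} : Set E) ⊆ ({x, P.b k, P.b l} : Set E) ∩ {x, P.b i, P.b j} := by
    intro z hz; simp at hz ⊢; tauto
  have hI' := P.f_mono _ _ hI
  have h1 : P.f {x} = 1 := P.rank_elt s i j hij hp
  have hBeq : ({x, P.b i, P.b j} : Set E) = {P.b i, P.b j, x} := by
    ext z; simp; tauto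
  have hB : P.f {x, P.b i, P.b j} = 2 := by rw [hBeq, hx]; exact P.frame s i j hij hp
  linarith

lemma b_elt_pair (i : Fin r) (s : S) (j k : Fin r) (hjk : j ≠ k) (hp : P.present s j k) :
    P.f {P.b i, P.elt s j k} = 2 := by
  by_cases hij : i = j
  · subst hij; exact P.rank_b_elt s i k hjk hp
  by_cases hik : i = k
  · subst hik
    rw [P.elt_symm s j i]
    exact P.rank_b_elt (P.inv s) i j (Ne.symm hjk) ((P.present_symm s j i).mp hp)
  · refine le_antisymm (P.pair_le_two _ _ (le_of_eq (P.f_single_b i))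
      (le_of_eq (P.rank_elt s j k hjk hp))) ?_
    refine P.pair_ge_two _ _ j k ?_ (le_of_eq (P.frame s j k hjk hp))
      (le_of_eq (P.rank_elt s j k hjk hp).symm)
    have hcard : ({i, j, k} : Finset (Fin r)).card = 3 := by
      rw [Finset.card_insert_of_notMem (by simp [hij, hik]),
        Finset.card_insert_of_notMem (by simp [hjk]), Finset.card_singleton]
    have h := P.card_le {i, j, k} {P.b i, P.b j, P.b k} ?_
    · rw [hcard] at h; exact_mod_cast h
    · intro m hm
      simp at hm ⊢
      rcases hm with rfl | rfl | rfl <;> tauto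

end IncoherentPDG


/-- Any pair of distinct elements of a (possibly incoherent) PDG has rank 2,
unless both are generator copies on the same index pair. -/
theorem pair_independence {E S : Type*} {r : ℕ} (P : IncoherentPDG E S r)
    (x y : E) (hxy : x ≠ y)
    (hx : (∃ i, x = P.b i) ∨
      ∃ s i j, i ≠ j ∧ P.present s i j ∧ x = P.elt s i j)
    (hy : (∃ i, y = P.b i) ∨
      ∃ s i j, i ≠ j ∧ P.present s i j ∧ y = P.elt s i j)
    (hexc : ¬ ∃ (s s' : S) (i j : Fin r), i ≠ j ∧ P.present s i j ∧
      P.present s' i j ∧ x = P.elt s i j ∧ y = P.elt s' i j) :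
    P.f {x, y} = 2 := by
  rcases hx with ⟨i, rfl⟩ | ⟨s, i, j, hij, hp, rfl⟩
  · rcases hy with ⟨k, rfl⟩ | ⟨s', k, l, hkl, hp', rfl⟩
    · -- basis / basis
      have hik : i ≠ k := by rintro rfl; exact hxy rfl
      have h := P.rank_basis {i, k}
      have himg : P.b '' ((({i, k} : Finset (Fin r)) : Set (Fin r))) = {P.b i, P.b k} := by
        simp [Set.image_insert_eq]
      have hcard : ({i, k} : Finset (Fin r)).card = 2 := by
        rw [Finset.card_insert_of_notMem (by simp [hik]), Finset.card_singleton]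
      rw [himg, hcard] at h
      exact_mod_cast h
    · exact P.b_elt_pair i s' k l hkl hp'
  · rcases hy with ⟨k, rfl⟩ | ⟨s', k, l, hkl, hp', rfl⟩
    · rw [Set.pair_comm]
      exact P.b_elt_pair k s i j hij hp
    · -- elt / elt
      have hne1 : ¬(i = k ∧ j = l) := by
        rintro ⟨rfl, rfl⟩
        exact hexc ⟨s, s', i, j, hij, hp, hp', rfl, rfl⟩
      have hne2 : ¬(i = l ∧ j = k) := by
        rintro ⟨rfl, rfl⟩
        exact hexc ⟨s, P.inv s', i, j, hij, hp,
          (P.present_symm s' j i).mp hp', rfl, P.elt_symm s' j i⟩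
      have h3 : (3:ℝ) ≤ P.f {P.elt s i j, P.b k, P.b l} := by
        by_cases hjk : j = k
        · subst hjk
          have hli : l ≠ i := fun h => hne2 ⟨h.symm, rfl⟩
          exact P.rank3_shared s i j l hij hp hli (Ne.symm hkl)
        · by_cases hjl : j = l
          · subst hjl
            have hki : k ≠ i := fun h => hne1 ⟨h.symm, rfl⟩
            have h := P.rank3_shared s i j k hij hp hki hkl
            rw [Set.pair_comm (P.b k) (P.b j)]
            exact h
          · by_cases hik : i = k
            · subst hik
              have hlj : l ≠ j := fun h => hne1 ⟨rfl, h.symm⟩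
              have h := P.rank3_shared (P.inv s) j i l (Ne.symm hij)
                ((P.present_symm s i j).mp hp) hlj (Ne.symm hkl)
              rw [P.elt_symm s i j]
              exact h
            · by_cases hil : i = l
              · subst hil
                have hkj : k ≠ j := fun h => hne2 ⟨rfl, h.symm⟩
                have h := P.rank3_shared (P.inv s) j i k (Ne.symm hij)
                  ((P.present_symm s i j).mp hp) hkj hkl
                rw [P.elt_symm s i j, Set.pair_comm (P.b k) (P.b i)]
                exact h
              · exact P.rank3_disj s i j k l hij hp hkl
                  (fun h => hik h.symm) (fun h => hjk h.symm)
                  (fun h => hil h.symm) (fun h => hjl h.symm)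
      refine le_antisymm (P.pair_le_two _ _ (le_of_eq (P.rank_elt s i j hij hp))
        (le_of_eq (P.rank_elt s' k l hkl hp'))) ?_
      exact P.pair_ge_two _ _ k l h3 (le_of_eq (P.frame s' k l hkl hp'))
        (le_of_eq (P.rank_elt s' k l hkl hp').symm)
end

section
/- Let (E,f,S) be a PDG of rank 4 in which Desargues-type relator propagation holds in the following sense: whenever f(s_{i,j}, s'_{j,k}, s''_{k,i}) = 2 for some distinct i,j,k,m permuting {1,2,3,4}, also f(s_{i,m}, s'_{m,k}, s''_{k,i}) = 2. Then if f(s_{p,q}, s'_{q,r}, s''_{r,p}) = 2 for one triple of distinct indices (p,q,r) in {1,…,4}, the same holds for every triple of distinct indices, i.e. (s,s',s'') is a relator. -/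
/-- A partial Dowling geometry of rank 4: a polymatroid `f` on `E`, a generating
set `S` with involution and distinguished element `e`, a distinguished independent
basis `b₁,…,b₄`, and elements `s_{i,j}` on the lines spanned by pairs of basis
elements, satisfying the coherence condition. -/
structure PDG4 (E S : Type*) where
  f : Set E → ℝ
  f_empty : f ∅ = 0
  f_mono : ∀ A B : Set E, A ⊆ B → f A ≤ f B
  f_submod : ∀ A B : Set E, f (A ∪ B) + f (A ∩ B) ≤ f A + f B
  inv : S → S
  e : S
  inv_invol : ∀ s, inv (inv s) = s
  inv_e : inv e = e
  b : Fin 4 → E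
  rank_basis : ∀ A : Finset (Fin 4), f (b '' (A : Set (Fin 4))) = A.card
  elt : S → Fin 4 → Fin 4 → E
  elt_symm : ∀ s i j, elt s i j = elt (inv s) j i
  frame : ∀ s (i j : Fin 4), i ≠ j → f {b i, b j, elt s i j} = 2
  rank_elt : ∀ s (i j : Fin 4), i ≠ j → f {elt s i j} = 1
  rank_b_elt : ∀ s (i j : Fin 4), i ≠ j → f {b i, elt s i j} = 2
  coherent : ∀ s (i j k : Fin 4), i ≠ j → j ≠ k → k ≠ i →
    f {elt s i j, elt (inv s) j k, elt e k i} = 2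

/-- If Desargues-type relator propagation holds, then a single good triple of
indices makes `(s,s',s'')` a relator. -/
theorem relator_propagation {E S : Type*} (P : PDG4 E S)
    (hprop : ∀ (s s' s'' : S) (i j k m : Fin 4),
      i ≠ j → i ≠ k → i ≠ m → j ≠ k → j ≠ m → k ≠ m →
      P.f {P.elt s i j, P.elt s' j k, P.elt s'' k i} = 2 →
      P.f {P.elt s i m, P.elt s' m k, P.elt s'' k i} = 2)
    (s s' s'' : S) (p q r : Fin 4) (hpq : p ≠ q) (hqr : q ≠ r) (hrp : r ≠ p)
    (hgood : P.f {P.elt s p q, P.elt s' q r, P.elt s'' r p} = 2) :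
    ∀ i j k : Fin 4, i ≠ j → j ≠ k → k ≠ i →
      P.f {P.elt s i j, P.elt s' j k, P.elt s'' k i} = 2 := by

  have hrot : ∀ x y z : E, ({x, y, z} : Set E) = {z, x, y} := by
    intro x y z; ext w
    simp only [Set.mem_insert_iff, Set.mem_singleton_iff]; tauto
  have hM1 : ∀ a b c d : Fin 4, a ≠ b → a ≠ c → a ≠ d → b ≠ c → b ≠ d → c ≠ d →
      P.f {P.elt s a b, P.elt s' b c, P.elt s'' c a} = 2 →
      P.f {P.elt s a d, P.elt s' d c, P.elt s'' c a} = 2 :=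
    fun a b c d h1 h2 h3 h4 h5 h6 hg => hprop s s' s'' a b c d h1 h2 h3 h4 h5 h6 hg
  have hM2 : ∀ a b c d : Fin 4, a ≠ b → a ≠ c → a ≠ d → b ≠ c → b ≠ d → c ≠ d →
      P.f {P.elt s a b, P.elt s' b c, P.elt s'' c a} = 2 →
      P.f {P.elt s d b, P.elt s' b c, P.elt s'' c d} = 2 := by
    intro a b c d h1 h2 h3 h4 h5 h6 hg
    rw [hrot] at hg ⊢
    exact hprop s'' s s' c a b d h2.symm h4.symm h6 h1 h3 h5 hg
  have hM3 : ∀ a b c d : Fin 4, a ≠ b → a ≠ c → a ≠ d → b ≠ c → b ≠ d → c ≠ d →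
      P.f {P.elt s a b, P.elt s' b c, P.elt s'' c a} = 2 →
      P.f {P.elt s a b, P.elt s' b d, P.elt s'' d a} = 2 := by
    intro a b c d h1 h2 h3 h4 h5 h6 hg
    rw [hrot, hrot] at hg ⊢
    exact hprop s' s'' s b c a d h4 h1.symm h5 h2.symm h6 h3 hg
  obtain ⟨mm, hm1, hm2, hm3⟩ :=
    (by decide : ∀ a b c : Fin 4, a ≠ b → b ≠ c → c ≠ a → ∃ x, x ≠ a ∧ x ≠ b ∧ x ≠ c)
      p q r hpq hqr hrp
  have dpq : p ≠ q := hpq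
  have dqp : q ≠ p := hpq.symm
  have dqr : q ≠ r := hqr
  have drq : r ≠ q := hqr.symm
  have drp : r ≠ p := hrp
  have dpr : p ≠ r := hrp.symm
  have dmp : mm ≠ p := hm1
  have dpm : p ≠ mm := hm1.symm
  have dmq : mm ≠ q := hm2
  have dqm : q ≠ mm := hm2.symm
  have dmr : mm ≠ r := hm3
  have drm : r ≠ mm := hm3.symm
  have hpqr := hgood
  have hpmr : P.f {P.elt s p mm, P.elt s' mm r, P.elt s'' r p} = 2 := hM1 p q r mm dpq dpr dpm dqr dqm drm hpqr
  have hmqr : P.f {P.elt s mm q, P.elt s' q r, P.elt s'' r mm} = 2 := hM2 p q r mm dpq dpr dpm dqr dqm drm hpqr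
  have hpqm : P.f {P.elt s p q, P.elt s' q mm, P.elt s'' mm p} = 2 := hM3 p q r mm dpq dpr dpm dqr dqm drm hpqr
  have hqmr : P.f {P.elt s q mm, P.elt s' mm r, P.elt s'' r q} = 2 := hM2 p mm r q dpm dpr dpq dmr dmq drq hpmr
  have hpmq : P.f {P.elt s p mm, P.elt s' mm q, P.elt s'' q p} = 2 := hM3 p mm r q dpm dpr dpq dmr dmq drq hpmr
  have hmpr : P.f {P.elt s mm p, P.elt s' p r, P.elt s'' r mm} = 2 := hM1 mm q r p dmq dmr dmp dqr dqp drp hmqr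
  have hmqp : P.f {P.elt s mm q, P.elt s' q p, P.elt s'' p mm} = 2 := hM3 mm q r p dmq dmr dmp dqr dqp drp hmqr
  have hprm : P.f {P.elt s p r, P.elt s' r mm, P.elt s'' mm p} = 2 := hM1 p q mm r dpq dpm dpr dqm dqr dmr hpqm
  have hrqm : P.f {P.elt s r q, P.elt s' q mm, P.elt s'' mm r} = 2 := hM2 p q mm r dpq dpm dpr dqm dqr dmr hpqm
  have hqpr : P.f {P.elt s q p, P.elt s' p r, P.elt s'' r q} = 2 := hM1 q mm r p dqm dqr dqp dmr dmp drp hqmr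
  have hqmp : P.f {P.elt s q mm, P.elt s' mm p, P.elt s'' p q} = 2 := hM3 q mm r p dqm dqr dqp dmr dmp drp hqmr
  have hprq : P.f {P.elt s p r, P.elt s' r q, P.elt s'' q p} = 2 := hM1 p mm q r dpm dpq dpr dmq dmr dqr hpmq
  have hrmq : P.f {P.elt s r mm, P.elt s' mm q, P.elt s'' q r} = 2 := hM2 p mm q r dpm dpq dpr dmq dmr dqr hpmq
  have hmpq : P.f {P.elt s mm p, P.elt s' p q, P.elt s'' q mm} = 2 := hM3 mm p r q dmp dmr dmq dpr dpq drq hmpr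
  have hmrp : P.f {P.elt s mm r, P.elt s' r p, P.elt s'' p mm} = 2 := hM1 mm q p r dmq dmp dmr dqp dqr dpr hmqp
  have hrqp : P.f {P.elt s r q, P.elt s' q p, P.elt s'' p r} = 2 := hM2 mm q p r dmq dmp dmr dqp dqr dpr hmqp
  have hqrm : P.f {P.elt s q r, P.elt s' r mm, P.elt s'' mm q} = 2 := hM2 p r mm q dpr dpm dpq drm drq dmq hprm
  have hrpm : P.f {P.elt s r p, P.elt s' p mm, P.elt s'' mm r} = 2 := hM1 r q mm p drq drm drp dqm dqp dmp hrqm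
  have hqpm : P.f {P.elt s q p, P.elt s' p mm, P.elt s'' mm q} = 2 := hM3 q p r mm dqp dqr dqm dpr dpm drm hqpr
  have hqrp : P.f {P.elt s q r, P.elt s' r p, P.elt s'' p q} = 2 := hM1 q mm p r dqm dqp dqr dmp dmr dpr hqmp
  have hrmp : P.f {P.elt s r mm, P.elt s' mm p, P.elt s'' p r} = 2 := hM2 q mm p r dqm dqp dqr dmp dmr dpr hqmp
  have hmrq : P.f {P.elt s mm r, P.elt s' r q, P.elt s'' q mm} = 2 := hM2 p r q mm dpr dpq dpm drq drm dqm hprq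
  have hrpq : P.f {P.elt s r p, P.elt s' p q, P.elt s'' q r} = 2 := hM1 r mm q p drm drq drp dmq dmp dqp hrmq
  intro i j k hij hjk hki
  have hcov : ∀ a b c d : Fin 4, a ≠ b → a ≠ c → a ≠ d → b ≠ c → b ≠ d → c ≠ d →
      ∀ x : Fin 4, x = a ∨ x = b ∨ x = c ∨ x = d := by decide
  have hi := hcov p q r mm dpq dpr dpm dqr dqm drm i
  have hj := hcov p q r mm dpq dpr dpm dqr dqm drm j
  have hk := hcov p q r mm dpq dpr dpm dqr dqm drm k
  rcases hi with rfl | rfl | rfl | rfl <;>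
    rcases hj with rfl | rfl | rfl | rfl <;>
      rcases hk with rfl | rfl | rfl | rfl <;>
        first
          | assumption
          | exact absurd rfl hij
          | exact absurd rfl hjk
          | exact absurd rfl hki
end

section
/- Let S be a set with an involution s ↦ s⁻¹ and a distinguished element e with e⁻¹ = e, equipped with a symmetric ternary relation R(s,s',s'') ('relator') that is closed under cyclic shifts and inversions (R(s,s',s'') implies R(s',s'',s) and R(s''⁻¹, s'⁻¹, s⁻¹)), satisfies R(s,s⁻¹,e) for all s, is total (for all s,s' there is t with R(s,s',t⁻¹)), is well-defined up to a parallelism equivalence relation ∼ (relators with two entries ∼-equivalent have third entries ∼-equivalent), and satisfies the Desargues associativity property: if R(x,y,s⁻¹), R(y,z,v⁻¹), and R(s,z,p) then R(x,v,p). Then S/∼ with product [s]·[s'] = [t⁻¹] for any t with R(s,s',t) is a group with identity [e] and inverse [s]⁻¹ = [s⁻¹]. -/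
/-- Group recovery from a relator relation with the listed algebraic properties
(abstraction of the geometric product on an almost entropic PDG of rank 4
closed under geometric products). -/
theorem group_from_relators {S : Type*} (inv : S → S) (e : S)
    (R : S → S → S → Prop) (sd : Setoid S)
    (hinv : ∀ s, inv (inv s) = s) (hinve : inv e = e)
    (hcyc : ∀ s s' s'', R s s' s'' → R s' s'' s)
    (hrinv : ∀ s s' s'', R s s' s'' → R (inv s'') (inv s') (inv s))
    (hid : ∀ s, R s (inv s) e)
    (htotal : ∀ s s', ∃ t, R s s' (inv t))
    (hwd : ∀ a b c a' b' c', R a b c → R a' b' c' →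
      sd.r a a' → sd.r b b' → sd.r c c')
    (hdes : ∀ x y z s v p, R x y (inv s) → R y z (inv v) → R s z p → R x v p) :
    ∃ (mul : Quotient sd → Quotient sd → Quotient sd) (one : Quotient sd)
      (iv : Quotient sd → Quotient sd),
      (∀ a b c, mul (mul a b) c = mul a (mul b c)) ∧
      (∀ a, mul one a = a) ∧ (∀ a, mul a one = a) ∧
      (∀ a, mul (iv a) a = one) ∧ (∀ a, mul a (iv a) = one) ∧
      one = Quotient.mk sd e ∧
      (∀ s, iv (Quotient.mk sd s) = Quotient.mk sd (inv s)) ∧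
      (∀ s s' t, R s s' t →
        mul (Quotient.mk sd s) (Quotient.mk sd s') = Quotient.mk sd (inv t)) := by
  classical
  -- the involution respects the equivalence relation
  have hinvc : ∀ a b, sd.r a b → sd.r (inv a) (inv b) := by
    intro a b hab
    have h1 := hcyc _ _ _ (hcyc _ _ _ (hid a))  -- R e a (inv a)
    have h2 := hcyc _ _ _ (hcyc _ _ _ (hid b))  -- R e b (inv b)
    exact hwd _ _ _ _ _ _ h1 h2 (sd.refl e) hab
  -- a choice of product representative
  set f : S → S → S := fun s s' => Classical.choose (htotal s s') with hfdef
  have hf : ∀ s s', R s s' (inv (f s s')) := fun s s' =>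
    Classical.choose_spec (htotal s s')
  -- uniqueness of the product up to ∼
  have huniq : ∀ a b c, R a b (inv c) → sd.r (f a b) c := by
    intro a b c h
    have h1 : R (inv b) (inv a) (f a b) := by
      have := hrinv _ _ _ (hf a b)
      rw [hinv] at this
      exact hcyc _ _ _ this
    have h2 : R (inv b) (inv a) c := by
      have := hrinv _ _ _ h
      rw [hinv] at this
      exact hcyc _ _ _ this
    exact hwd _ _ _ _ _ _ h1 h2 (sd.refl _) (sd.refl _)
  -- f respects ∼ in both arguments
  have hfc : ∀ a b a' b', sd.r a a' → sd.r b b' → sd.r (f a b) (f a' b') := by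
    intro a b a' b' ha hb
    have h := hwd _ _ _ _ _ _ (hf a b) (hf a' b') ha hb
    have h2 := hinvc _ _ h
    rwa [hinv, hinv] at h2
  refine ⟨Quotient.lift₂ (fun s s' => Quotient.mk sd (f s s'))
      (fun a b a' b' ha hb => Quotient.sound (hfc a b a' b' ha hb)),
    Quotient.mk sd e,
    Quotient.lift (fun s => Quotient.mk sd (inv s))
      (fun a b hab => Quotient.sound (hinvc a b hab)),
    ?_, ?_, ?_, ?_, ?_, rfl, fun s => rfl, ?_⟩
  · -- associativity
    intro a b c
    induction a using Quotient.inductionOn with | _ x =>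
    induction b using Quotient.inductionOn with | _ y =>
    induction c using Quotient.inductionOn with | _ z =>
    show Quotient.mk sd (f (f x y) z) = Quotient.mk sd (f x (f y z))
    have hR : R x (f y z) (inv (f (f x y) z)) :=
      hdes x y z (f x y) (f y z) _ (hf x y) (hf y z) (hf (f x y) z)
    exact (Quotient.sound (huniq _ _ _ hR)).symm
  · -- left identity
    intro a
    induction a using Quotient.inductionOn with | _ s =>
    show Quotient.mk sd (f e s) = Quotient.mk sd s
    have : R e s (inv s) := hcyc _ _ _ (hcyc _ _ _ (hid s))
    exact Quotient.sound (huniq _ _ _ this)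
  · -- right identity
    intro a
    induction a using Quotient.inductionOn with | _ s =>
    show Quotient.mk sd (f s e) = Quotient.mk sd s
    have h1 : R s (inv s) (inv e) := by rw [hinve]; exact hid s
    have h2 : R (inv s) s (inv e) := by
      rw [hinve]
      have := hid (inv s); rwa [hinv] at this
    have h3 : R e s (inv s) := hcyc _ _ _ (hcyc _ _ _ (hid s))
    have : R s e (inv s) := hdes s (inv s) s e e (inv s) h1 h2 h3
    exact Quotient.sound (huniq _ _ _ this)
  · -- left inverse
    intro a
    induction a using Quotient.inductionOn with | _ s =>
    show Quotient.mk sd (f (inv s) s) = Quotient.mk sd e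
    have : R (inv s) s (inv e) := by
      rw [hinve]
      have := hid (inv s); rwa [hinv] at this
    exact Quotient.sound (huniq _ _ _ this)
  · -- right inverse
    intro a
    induction a using Quotient.inductionOn with | _ s =>
    show Quotient.mk sd (f s (inv s)) = Quotient.mk sd e
    have : R s (inv s) (inv e) := by rw [hinve]; exact hid s
    exact Quotient.sound (huniq _ _ _ this)
  · -- compatibility with R
    intro s s' t h
    show Quotient.mk sd (f s s') = Quotient.mk sd (inv t)
    have : R s s' (inv (inv t)) := by rwa [hinv]
    exact Quotient.sound (huniq _ _ _ this)
end
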